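/- (Kechris–Solecki–Todorcevic) Let G be a Borel graph on a standard Borel space X such that every vertex of G has at most d neighbors, where d is a finite natural number. Then the Borel chromatic number of G is at most d + 1: there exist Borel G-independent sets I_1, …, I_{d+1} whose union is X. -/

import Mathlib

open MeasureTheory Set

private lemma proj_meas : ∀ (d : ℕ) {X : Type*} [MeasurableSpace X] [StandardBorelSpace X]
    (B : Set (X × ℝ)), MeasurableSet B →
    (∀ x, {y | (x, y) ∈ B}.Finite) →
    (∀ x, {y | (x, y) ∈ B}.ncard ≤ d) →
    MeasurableSet (Prod.fst '' B) := by
  intro d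
  induction d with
  | zero =>
    intro X _ _ B hB hfin hcard
    have : B = ∅ := by
      ext ⟨x, y⟩
      simp only [mem_empty_iff_false, iff_false]
      intro hxy
      have h0 : {y | (x, y) ∈ B} = ∅ :=
        (Set.ncard_eq_zero (hfin x)).mp (Nat.le_zero.mp (hcard x))
      have : y ∈ ({y | (x, y) ∈ B} : Set ℝ) := hxy
      rw [h0] at this
      exact this
    simp [this]
  | succ d IH =>
    intro X _ _ B hB hfin hcard
    set T : Set ((X × ℝ) × ℝ) :=
      {p | p.1 ∈ B ∧ (p.1.1, p.2) ∈ B ∧ p.2 < p.1.2} with hT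
    have hTmeas : MeasurableSet T := by
      apply MeasurableSet.inter
      · exact measurable_fst hB
      · apply MeasurableSet.inter
        · exact (measurable_fst.fst.prodMk measurable_snd) hB
        · exact measurableSet_lt measurable_snd measurable_fst.snd
    have hTfin : ∀ a : X × ℝ, {z | (a, z) ∈ T}.Finite := by
      intro a
      apply (hfin a.1).subset
      intro z hz
      exact hz.2.1
    have hTcard : ∀ a : X × ℝ, {z | (a, z) ∈ T}.ncard ≤ d := by
      intro ⟨x, y⟩
      by_cases hxy : (x, y) ∈ B
      · have hsub : {z | ((⟨x, y⟩ : X × ℝ), z) ∈ T} ⊆ {z | (x, z) ∈ B} \ {y} := by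
          intro z hz
          refine ⟨hz.2.1, ?_⟩
          simp only [mem_singleton_iff]
          intro h; exact absurd hz.2.2 (by simp [h])
        calc {z | ((⟨x, y⟩ : X × ℝ), z) ∈ T}.ncard
            ≤ ({y_1 | (x, y_1) ∈ B} \ {y}).ncard :=
              Set.ncard_le_ncard hsub (hfin x).diff
          _ = {y_1 | (x, y_1) ∈ B}.ncard - 1 :=
              Set.ncard_diff_singleton_of_mem (s := {y_1 | (x, y_1) ∈ B}) hxy
          _ ≤ d := by have := hcard x; omega
      · have : {z | ((⟨x, y⟩ : X × ℝ), z) ∈ T} = ∅ := by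
          ext z; simp only [hT, mem_setOf_eq, mem_empty_iff_false, iff_false]
          intro h; exact hxy h.1
        simp [this]
    have hprojT : MeasurableSet (Prod.fst '' T) := IH T hTmeas hTfin hTcard
    set M : Set (X × ℝ) := B \ (Prod.fst '' T) with hM
    have hMmeas : MeasurableSet M := hB.diff hprojT
    have himg : Prod.fst '' M = Prod.fst '' B := by
      apply Subset.antisymm (image_mono diff_subset)
      rintro x ⟨⟨x', y⟩, hy, rfl⟩
      obtain ⟨z, hz, hzmin⟩ :=
        Set.exists_min_image {y | (x', y) ∈ B} id (hfin x') ⟨y, hy⟩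
      refine ⟨(x', z), ⟨hz, ?_⟩, rfl⟩
      rintro ⟨⟨⟨a, b⟩, c⟩, hc, hfst⟩
      simp only [Prod.mk.injEq] at hfst
      obtain ⟨rfl, rfl⟩ := hfst
      exact absurd (hzmin c hc.2.1) (by simpa using hc.2.2)
    have hinj : InjOn Prod.fst M := by
      rintro ⟨x1, y1⟩ h1 ⟨x2, y2⟩ h2 (h : x1 = x2)
      subst h
      rcases lt_trichotomy y1 y2 with h | h | h
      · exact absurd ⟨((x1, y2), y1), ⟨h2.1, h1.1, h⟩, rfl⟩ h2.2
      · simp [h]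
      · exact absurd ⟨((x1, y1), y2), ⟨h1.1, h2.1, h⟩, rfl⟩ h1.2
    rw [← himg]
    exact hMmeas.image_of_measurable_injOn measurable_fst hinj

private lemma nbr_meas {X : Type*} [MeasurableSpace X] [StandardBorelSpace X]
    (G : SimpleGraph X) (hG : MeasurableSet {p : X × X | G.Adj p.1 p.2})
    (d : ℕ) (hfin : ∀ x, {y | G.Adj x y}.Finite) (hdeg : ∀ x, {y | G.Adj x y}.ncard ≤ d)
    {A : Set X} (hA : MeasurableSet A) :
    MeasurableSet {x | ∃ y, G.Adj x y ∧ y ∈ A} := by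
  obtain ⟨e, he⟩ := exists_measurableEmbedding_real (α := X)
  set B : Set (X × ℝ) :=
    (fun p : X × X => (p.1, e p.2)) '' ({p : X × X | G.Adj p.1 p.2} ∩ {p | p.2 ∈ A}) with hBdef
  have hemb : MeasurableEmbedding (fun p : X × X => (p.1, e p.2)) :=
    MeasurableEmbedding.id.prodMap he
  have hBmeas : MeasurableSet B :=
    hemb.measurableSet_image.2 (hG.inter (measurable_snd hA))
  have hsec : ∀ x, {t | (x, t) ∈ B} = e '' ({y | G.Adj x y} ∩ A) := by
    intro x
    ext t
    constructor
    · rintro ⟨⟨x', y⟩, ⟨hadj, hyA⟩, heq⟩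
      simp only [Prod.mk.injEq] at heq
      obtain ⟨rfl, rfl⟩ := heq
      exact ⟨y, ⟨hadj, hyA⟩, rfl⟩
    · rintro ⟨y, ⟨hadj, hyA⟩, rfl⟩
      exact ⟨(x, y), ⟨hadj, hyA⟩, rfl⟩
  have himg : Prod.fst '' B = {x | ∃ y, G.Adj x y ∧ y ∈ A} := by
    ext x
    constructor
    · rintro ⟨⟨x', t⟩, hB, rfl⟩
      rcases hB with ⟨⟨x'', y⟩, ⟨hadj, hyA⟩, heq⟩
      simp only [Prod.mk.injEq] at heq
      obtain ⟨rfl, -⟩ := heq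
      exact ⟨y, hadj, hyA⟩
    · rintro ⟨y, hadj, hyA⟩
      exact ⟨(x, e y), ⟨(x, y), ⟨hadj, hyA⟩, rfl⟩, rfl⟩
  rw [← himg]
  apply proj_meas d B hBmeas
  · intro x
    rw [hsec x]
    exact ((hfin x).inter_of_left A).image e
  · intro x
    rw [hsec x, Set.ncard_image_of_injective _ he.injective]
    exact le_trans (Set.ncard_le_ncard inter_subset_left (hfin x)) (hdeg x)

private def kstStage {X : Type*} (nbr : Set X → Set X) (C : ℕ → Set X) (k : ℕ) : ℕ → Fin k → Set X
  | n => fun i =>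
    C n ∩ (nbr (⋃ m : Fin n, kstStage nbr C k m i))ᶜ ∩
      ⋂ j ∈ Finset.Iio i, nbr (⋃ m : Fin n, kstStage nbr C k m j)
  termination_by n => n
  decreasing_by all_goals exact m.isLt

/-- Kechris–Solecki–Todorcevic. A Borel graph of maximum degree at
most `d` on a standard Borel space has Borel chromatic number at most `d + 1`. -/
theorem borel_chromatic_le_degree_succ
    {X : Type*} [MeasurableSpace X] [StandardBorelSpace X]
    (G : SimpleGraph X)
    (hGBorel : MeasurableSet {p : X × X | G.Adj p.1 p.2})
    (d : ℕ)
    (hfin : ∀ x : X, {y : X | G.Adj x y}.Finite)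
    (hdeg : ∀ x : X, {y : X | G.Adj x y}.ncard ≤ d) :
    ∃ I : Fin (d + 1) → Set X,
      (∀ i, MeasurableSet (I i) ∧ ∀ x ∈ I i, ∀ y ∈ I i, ¬ G.Adj x y) ∧
      (⋃ i, I i) = Set.univ := by
  classical
  obtain ⟨e, he⟩ := exists_measurableEmbedding_real (α := X)
  obtain ⟨q, hq⟩ := exists_surjective_nat (ℚ × ℚ)
  set nbr : Set X → Set X := fun A => {x | ∃ y, G.Adj x y ∧ y ∈ A} with hnbr
  have hnbrmeas : ∀ {A : Set X}, MeasurableSet A → MeasurableSet (nbr A) :=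
    fun hA => nbr_meas G hGBorel d hfin hdeg hA
  -- the countable family of "interval" sets
  set U : ℕ → Set X := fun n => e ⁻¹' (Set.Ioo ((q n).1 : ℝ) ((q n).2 : ℝ)) with hU
  have hUmeas : ∀ n, MeasurableSet (U n) := fun n => he.measurable measurableSet_Ioo
  set V : ℕ → Set X := fun n => U n \ nbr (U n) with hV
  have hVmeas : ∀ n, MeasurableSet (V n) := fun n => (hUmeas n).diff (hnbrmeas (hUmeas n))
  have hVind : ∀ n, ∀ x ∈ V n, ∀ y ∈ V n, ¬ G.Adj x y := by
    intro n x hx y hy hadj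
    exact hx.2 ⟨y, hadj, hy.1⟩
  have hVcover : ∀ x, ∃ n, x ∈ V n := by
    intro x
    set S : Set ℝ := e '' {y | G.Adj x y} with hS
    have hSfin : S.Finite := (hfin x).image e
    have hexS : e x ∉ S := by
      rintro ⟨y, hy, hey⟩
      have : y = x := he.injective hey
      exact G.irrefl (this ▸ hy)
    obtain ⟨ε, hε, hball⟩ := Metric.isOpen_iff.mp hSfin.isClosed.isOpen_compl (e x) hexS
    obtain ⟨a, ha1, ha2⟩ := exists_rat_btwn (show e x - ε < e x by linarith)
    obtain ⟨b, hb1, hb2⟩ := exists_rat_btwn (show e x < e x + ε by linarith)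
    obtain ⟨n, hn⟩ := hq (a, b)
    refine ⟨n, ?_, ?_⟩
    · show e x ∈ Set.Ioo ((q n).1 : ℝ) ((q n).2 : ℝ)
      rw [hn]
      exact ⟨ha2, hb1⟩
    · rintro ⟨y, hadj, hyU⟩
      have hyU' : (e y) ∈ Set.Ioo ((a : ℝ)) (b : ℝ) := by
        have h2 : e y ∈ Set.Ioo ((q n).1 : ℝ) ((q n).2 : ℝ) := hyU
        rw [hn] at h2
        exact h2
      have : e y ∈ Metric.ball (e x) ε := by
        rw [Metric.mem_ball, Real.dist_eq, abs_sub_lt_iff]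
        obtain ⟨h1, h2⟩ := hyU'
        constructor <;> linarith
      exact hball this ⟨y, hadj, rfl⟩
  -- disjointify
  set C : ℕ → Set X := fun n => V n \ ⋃ m, ⋃ (_ : m < n), V m with hC
  have hCmeas : ∀ n, MeasurableSet (C n) :=
    fun n => (hVmeas n).diff (MeasurableSet.iUnion fun m => MeasurableSet.iUnion fun _ => hVmeas m)
  have hCsubV : ∀ n, C n ⊆ V n := fun n => diff_subset
  have hCcover : ∀ x, ∃ n, x ∈ C n := by
    intro x
    refine ⟨Nat.find (hVcover x), Nat.find_spec (hVcover x), ?_⟩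
    simp only [mem_iUnion]
    rintro ⟨m, hm, hxm⟩
    exact Nat.find_min (hVcover x) hm hxm
  have hCdisj : ∀ {n m : ℕ} {x : X}, x ∈ C n → x ∈ C m → n = m := by
    intro n m x hn hm
    by_contra hne
    rcases Nat.lt_or_ge n m with h | h
    · exact hm.2 (mem_iUnion.mpr ⟨n, mem_iUnion.mpr ⟨h, hCsubV n hn⟩⟩)
    · exact hn.2 (mem_iUnion.mpr ⟨m, mem_iUnion.mpr ⟨Nat.lt_of_le_of_ne h (Ne.symm hne), hCsubV m hm⟩⟩)
  -- the greedy recoloring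
  set A : ℕ → Fin (d + 1) → Set X := kstStage nbr C (d + 1) with hA
  set P : ℕ → Fin (d + 1) → Set X := fun n j => ⋃ m : Fin n, A m j with hP
  have hAdef : ∀ n i, A n i = C n ∩ (nbr (P n i))ᶜ ∩ ⋂ j ∈ Finset.Iio i, nbr (P n j) := by
    intro n i
    rw [hA, hP, kstStage]
  have hAmeas : ∀ n, ∀ i, MeasurableSet (A n i) := by
    intro n
    induction n using Nat.strong_induction_on with
    | _ n IH =>
      intro i
      have hPm : ∀ j, MeasurableSet (P n j) :=
        fun j => MeasurableSet.iUnion fun m => IH m m.isLt j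
      rw [hAdef]
      refine ((hCmeas n).inter (hnbrmeas (hPm i)).compl).inter ?_
      exact MeasurableSet.biInter (Finset.Iio i : Finset (Fin (d + 1))).countable_toSet
        fun j _ => hnbrmeas (hPm j)
  have hAsubC : ∀ n i, A n i ⊆ C n := by
    intro n i x hx
    rw [hAdef] at hx
    exact hx.1.1
  have hAnot : ∀ n i, ∀ x ∈ A n i, x ∉ nbr (P n i) := by
    intro n i x hx
    rw [hAdef] at hx
    exact hx.1.2
  have hAlt : ∀ n (i j : Fin (d + 1)), j < i → ∀ x ∈ A n i, x ∈ nbr (P n j) := by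
    intro n i j hji x hx
    rw [hAdef] at hx
    exact Set.mem_iInter₂.mp hx.2 j (Finset.mem_Iio.mpr hji)
  have hAdisj : ∀ {n m : ℕ} {i j : Fin (d + 1)} {x : X},
      x ∈ A n i → x ∈ A m j → n = m ∧ i = j := by
    intro n m i j x hxi hxj
    have hnm : n = m := hCdisj (hAsubC n i hxi) (hAsubC m j hxj)
    subst hnm
    refine ⟨rfl, ?_⟩
    rcases lt_trichotomy i j with h | h | h
    · exact absurd (hAlt n j i h x hxj) (hAnot n i x hxi)
    · exact h
    · exact absurd (hAlt n i j h x hxi) (hAnot n j x hxj)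
  -- coverage of stages
  have hAcover : ∀ (n : ℕ) (x : X), x ∈ C n → ∃ i, x ∈ A n i := by
    intro n x hxC
    set F : Finset (Fin (d + 1)) := Finset.univ.filter (fun i => x ∈ nbr (P n i)) with hF
    have hgdef : ∀ i ∈ F, ∃ y, G.Adj x y ∧ y ∈ P n i := by
      intro i hi
      exact (Finset.mem_filter.mp hi).2
    have hFcard : F.card ≤ d := by
      set g : Fin (d + 1) → X := fun i =>
        if h : x ∈ nbr (P n i) then h.choose else x with hg
      have hmaps : ∀ i ∈ F, g i ∈ (hfin x).toFinset := by
        intro i hi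
        have h := (Finset.mem_filter.mp hi).2
        simp only [hg, dif_pos h]
        exact (hfin x).mem_toFinset.mpr h.choose_spec.1
      have hinj : Set.InjOn g F := by
        intro i hi j hj hij
        have h1 := (Finset.mem_filter.mp hi).2
        have h2 := (Finset.mem_filter.mp hj).2
        have hgi : g i ∈ P n i := by simp only [hg, dif_pos h1]; exact h1.choose_spec.2
        have hgj : g j ∈ P n j := by simp only [hg, dif_pos h2]; exact h2.choose_spec.2
        rw [hij] at hgi
        obtain ⟨⟨m1, _⟩, hm1⟩ := mem_iUnion.mp hgi
        obtain ⟨⟨m2, _⟩, hm2⟩ := mem_iUnion.mp hgj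
        exact (hAdisj hm1 hm2).2
      calc F.card ≤ (hfin x).toFinset.card := Finset.card_le_card_of_injOn g hmaps hinj
        _ = {y | G.Adj x y}.ncard := (Set.ncard_eq_toFinset_card _ (hfin x)).symm
        _ ≤ d := hdeg x
    have hFne : Fᶜ.Nonempty := by
      rw [Finset.nonempty_iff_ne_empty]
      intro hem
      have : F = Finset.univ := by
        rwa [Finset.compl_eq_empty_iff] at hem
      rw [this, Finset.card_univ, Fintype.card_fin] at hFcard
      omega
    set i₀ : Fin (d + 1) := Fᶜ.min' hFne with hi₀
    have hi₀mem : i₀ ∈ Fᶜ := Finset.min'_mem _ _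
    refine ⟨i₀, ?_⟩
    rw [hAdef]
    refine ⟨⟨hxC, ?_⟩, ?_⟩
    · intro hxn
      exact (Finset.mem_compl.mp hi₀mem) (Finset.mem_filter.mpr ⟨Finset.mem_univ _, hxn⟩)
    · apply Set.mem_iInter₂.mpr
      intro j hj
      rw [Finset.mem_Iio] at hj
      by_contra hxj
      have : j ∈ Fᶜ := Finset.mem_compl.mpr (fun hjF => hxj (Finset.mem_filter.mp hjF).2)
      exact absurd (Finset.min'_le _ j this) (not_le.mpr hj)
  -- conclude
  refine ⟨fun i => ⋃ n, A n i, fun i => ⟨MeasurableSet.iUnion fun n => hAmeas n i, ?_⟩, ?_⟩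
  · rintro x hx y hy hadj
    obtain ⟨n, hxn⟩ := mem_iUnion.mp hx
    obtain ⟨m, hym⟩ := mem_iUnion.mp hy
    rcases lt_trichotomy n m with h | h | h
    · exact hAnot m i y hym ⟨x, hadj.symm, mem_iUnion.mpr ⟨⟨n, h⟩, hxn⟩⟩
    · subst h
      exact hVind n x (hCsubV n (hAsubC n i hxn)) y (hCsubV n (hAsubC n i hym)) hadj
    · exact hAnot n i x hxn ⟨y, hadj, mem_iUnion.mpr ⟨⟨m, h⟩, hym⟩⟩
  · ext x
    simp only [mem_iUnion, mem_univ, iff_true]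
    obtain ⟨n, hxC⟩ := hCcover x
    obtain ⟨i, hi⟩ := hAcover n x hxC
    exact ⟨i, n, hi⟩
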